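/- There exists a constant χ₁ > 0 such that for all integers N ≥ 1 and all integers q with 2 ≤ q ≤ N/2, Σ_{p=1}^{q−2} S(q,p)·(N)_p / N^q ≤ χ₁ q⁴/N². Equivalently, for the Markov chain R^{(N,i)} with transition matrix M^{(N)}: for all n ≥ 0 and all i, P[R^{(N,i)}_{n+1} ≤ R^{(N,i)}_n − 2 | R^{(N,i)}_n = q] ≤ χ₁ q⁴/N² whenever 2 ≤ q ≤ N/2 and the conditioning event has positive probability. -/

import Mathlib

open MeasureTheory Filter

universe u

/-- Stirling numbers of the second kind. -/
def stirling2 : ℕ → ℕ → ℕ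
  | 0, 0 => 1
  | 0, _ + 1 => 0
  | _ + 1, 0 => 0
  | n + 1, k + 1 => (k + 1) * stirling2 n (k + 1) + stirling2 n k

/-- The transition matrix `M^{(N)}_{q,p} = S(q,p) · (N)_p / N^q`
(`S(q,p) = 0` for `p > q`, so the entries with `p > q` vanish automatically). -/
noncomputable def transMat (N q p : ℕ) : ENNReal :=
  ((stirling2 q p * Nat.descFactorial N p : ℕ) : ENNReal) / (N : ENNReal) ^ q

/-- `R` is (a version of) the Markov chain with transition matrix `K` started at `i`:
its finite dimensional distributions are the required ones. -/
def IsMarkovChainWith {Ω : Type*} [MeasurableSpace Ω] (P : Measure Ω)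
    (R : ℕ → Ω → ℕ) (i : ℕ) (K : ℕ → ℕ → ENNReal) : Prop :=
  ∀ (n : ℕ) (q : ℕ → ℕ),
    P {ω | ∀ m ≤ n, R m ω = q m} =
      (if q 0 = i then 1 else 0) * ∏ m ∈ Finset.range n, K (q m) (q (m + 1))

/-- First hitting time of the absorbing state `1`. -/
noncomputable def hitOne {Ω : Type*} (R : ℕ → Ω → ℕ) (ω : Ω) : ℕ :=
  sInf {n | R n ω = 1}

lemma stirling2_eq_zero : ∀ n k, n < k → stirling2 n k = 0 := by
  intro n
  induction n with
  | zero => intro k hk; cases k with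
    | zero => omega
    | succ k => rfl
  | succ n ih =>
    intro k hk
    cases k with
    | zero => omega
    | succ k =>
      show (k + 1) * stirling2 n (k + 1) + stirling2 n k = 0
      rw [ih (k+1) (by omega), ih k (by omega)]
      ring

lemma stirling2_self : ∀ n, stirling2 n n = 1 := by
  intro n
  induction n with
  | zero => rfl
  | succ n ih =>
    show (n + 1) * stirling2 n (n + 1) + stirling2 n n = 1
    rw [stirling2_eq_zero n (n+1) (by omega), ih]
    ring

lemma sum_stirling2_descFactorial (q N : ℕ) :
    ∑ p ∈ Finset.range (q + 1), stirling2 q p * Nat.descFactorial N p = N ^ q := by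
  induction q with
  | zero => simp [stirling2]
  | succ q ih =>
    rw [Finset.sum_range_succ']
    have h0 : stirling2 (q + 1) 0 * Nat.descFactorial N 0 = 0 := by
      have : stirling2 (q + 1) 0 = 0 := rfl
      simp [this]
    rw [h0, add_zero]
    have hterm : ∀ p, stirling2 (q + 1) (p + 1) * Nat.descFactorial N (p + 1)
        = (p + 1) * stirling2 q (p + 1) * Nat.descFactorial N (p + 1)
          + stirling2 q p * Nat.descFactorial N (p + 1) := by
      intro p
      show ((p + 1) * stirling2 q (p + 1) + stirling2 q p) * _ = _
      ring
    simp only [hterm]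
    rw [Finset.sum_add_distrib]
    have shift : ∑ p ∈ Finset.range (q + 1), (p + 1) * stirling2 q (p + 1) * Nat.descFactorial N (p + 1)
        = ∑ m ∈ Finset.range (q + 1), m * stirling2 q m * Nat.descFactorial N m := by
      have h2 : ∑ m ∈ Finset.range (q + 2), m * stirling2 q m * Nat.descFactorial N m
          = ∑ p ∈ Finset.range (q + 1), (p + 1) * stirling2 q (p + 1) * Nat.descFactorial N (p + 1)
            + 0 * stirling2 q 0 * Nat.descFactorial N 0 := Finset.sum_range_succ' _ _
      have h3 : ∑ m ∈ Finset.range (q + 2), m * stirling2 q m * Nat.descFactorial N m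
          = ∑ m ∈ Finset.range (q + 1), m * stirling2 q m * Nat.descFactorial N m
            + (q + 1) * stirling2 q (q + 1) * Nat.descFactorial N (q + 1) := Finset.sum_range_succ _ _
      rw [stirling2_eq_zero q (q+1) (by omega), mul_zero, zero_mul, add_zero] at h3
      rw [zero_mul, zero_mul, add_zero] at h2
      exact h2.symm.trans h3
    rw [shift]
    have hpoint : ∀ x, x * stirling2 q x * Nat.descFactorial N x
        + stirling2 q x * Nat.descFactorial N (x + 1)
        = N * (stirling2 q x * Nat.descFactorial N x) := by
      intro x
      rw [Nat.descFactorial_succ]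
      rcases le_or_gt x N with h | h
      · zify [h]
        ring
      · rw [Nat.descFactorial_eq_zero_iff_lt.mpr h]
        simp [Nat.sub_eq_zero_of_le (le_of_lt h)]
    rw [← Finset.sum_add_distrib]
    simp only [hpoint]
    rw [← Finset.mul_sum, ih]
    ring

lemma pow_succ_add_le (n a : ℕ) : a ^ (n + 1) + (n + 1) * a ^ n ≤ (a + 1) ^ (n + 1) := by
  induction n with
  | zero => simp
  | succ n ih =>
    have : (a + 1) ^ (n + 1 + 1) = (a + 1) ^ (n + 1) * (a + 1) := by ring
    rw [this]
    calc a ^ (n + 1 + 1) + (n + 1 + 1) * a ^ (n + 1)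
        ≤ (a ^ (n + 1) + (n + 1) * a ^ n) * (a + 1) := by
          have hle : a * a ^ n ≤ a ^ (n+1) := by rw [pow_succ]; ring_nf; exact le_rfl
          calc a ^ (n + 1 + 1) + (n + 1 + 1) * a ^ (n + 1)
              ≤ a ^ (n+1) * a + (n+1) * a ^ n * a + (a ^ (n+1) + (n+1) * a^n) := by
                have h1 : a ^ (n+1+1) = a ^ (n+1) * a := by ring
                have h2 : (n+1) * a ^ n * a = (n+1) * (a * a ^ n) := by ring
                have h3 : a * a ^ n = a ^ (n+1) := by rw [pow_succ]; ring
                rw [h1, h2, h3]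
                nlinarith [pow_nonneg (Nat.zero_le a) n, Nat.zero_le (a ^ (n+1))]
            _ = (a ^ (n + 1) + (n + 1) * a ^ n) * (a + 1) := by ring
      _ ≤ (a + 1) ^ (n + 1) * (a + 1) := Nat.mul_le_mul_right _ ih

lemma stirling2_bound : ∀ q j, j ≤ q → 2 ^ j * stirling2 q (q - j) ≤ q ^ (2 * j) := by
  intro q
  induction q with
  | zero => intro j hj; interval_cases j; simp [stirling2]
  | succ q ih =>
    intro j hj
    rcases Nat.eq_zero_or_pos j with rfl | hj1
    · simp [stirling2_self]
    rcases Nat.lt_or_ge j (q + 1) with hlt | hge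
    · -- 1 ≤ j ≤ q, so q + 1 - j = (q - j) + 1
      have hqj : q + 1 - j = (q - j) + 1 := by omega
      rw [hqj]
      have hs : stirling2 (q + 1) ((q - j) + 1)
          = ((q - j) + 1) * stirling2 q ((q - j) + 1) + stirling2 q (q - j) := rfl
      rw [hs]
      have h1 : (q - j) + 1 = q - (j - 1) := by omega
      have ih1 := ih (j - 1) (by omega)
      have ih2 := ih j (by omega)
      rw [← h1] at ih1
      -- 2^j * ((q-j+1) * S(q, q-j+1) + S(q,q-j))
      --   = 2 * (q-j+1) * (2^(j-1) * S(q,q-j+1)) + 2^j * S(q,q-j)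
      have h2j : 2 ^ j = 2 * 2 ^ (j - 1) := by
        rw [← pow_succ']
        congr 1
        omega
      calc 2 ^ j * (((q - j) + 1) * stirling2 q ((q - j) + 1) + stirling2 q (q - j))
          = 2 * ((q - j) + 1) * (2 ^ (j - 1) * stirling2 q ((q - j) + 1))
            + 2 ^ j * stirling2 q (q - j) := by rw [h2j]; ring
        _ ≤ 2 * ((q - j) + 1) * q ^ (2 * (j - 1)) + q ^ (2 * j) := by
            gcongr
        _ ≤ (q + 1) ^ (2 * j) := by
            have e : 2 * j - 1 + 1 = 2 * j := by omega
            have H := pow_succ_add_le (2 * j - 1) q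
            rw [e] at H
            have h1 : q * q ^ (2 * (j - 1)) = q ^ (2 * j - 1) := by
              rw [← pow_succ']
              congr 1
              omega
            calc 2 * ((q - j) + 1) * q ^ (2 * (j - 1)) + q ^ (2 * j)
                ≤ 2 * q * q ^ (2 * (j - 1)) + q ^ (2 * j) := by
                  gcongr
                  omega
              _ = 2 * q ^ (2 * j - 1) + q ^ (2 * j) := by rw [mul_assoc, h1]
              _ ≤ 2 * j * q ^ (2 * j - 1) + q ^ (2 * j) := by
                  gcongr
                  omega
              _ ≤ (q + 1) ^ (2 * j) := by omega
    · -- j = q + 1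
      have : q + 1 - j = 0 := by omega
      rw [this]
      have h0 : stirling2 (q + 1) 0 = 0 := rfl
      simp [h0]

lemma geom_half_le (m : ℕ) : ∑ k ∈ Finset.range m, (1/2 : ℝ) ^ k ≤ 2 := by
  rw [geom_sum_eq (by norm_num : (1/2 : ℝ) ≠ 1)]
  have h : (0:ℝ) ≤ (1/2 : ℝ) ^ m := by positivity
  have h2 : (1/2 : ℝ) ^ m ≤ 1 := pow_le_one₀ (by norm_num) (by norm_num)
  rw [div_le_iff_of_neg (by norm_num : (1/2 : ℝ) - 1 < 0)]
  linarith

lemma analytic_bound (N q : ℕ) (hN : 1 ≤ N) (hq : 2 ≤ q) :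
    (∑ p ∈ Finset.Icc 1 (q - 2),
        ((stirling2 q p * Nat.descFactorial N p : ℕ) : ℝ) / (N : ℝ) ^ q) ≤
      (q : ℝ) ^ 4 / (N : ℝ) ^ 2 := by
  have hN0 : (0:ℝ) < (N:ℝ) := by exact_mod_cast hN
  have hNq : (0:ℝ) < (N:ℝ) ^ q := by positivity
  rcases le_or_gt N (q ^ 2) with hcase | hcase
  · -- N ≤ q², so sum ≤ 1 ≤ q⁴/N²
    have h1 : (∑ p ∈ Finset.Icc 1 (q - 2),
        ((stirling2 q p * Nat.descFactorial N p : ℕ) : ℝ) / (N : ℝ) ^ q) ≤ 1 := by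
      rw [← Finset.sum_div, div_le_one hNq]
      have hsub : Finset.Icc 1 (q - 2) ⊆ Finset.range (q + 1) := by
        intro p hp
        simp only [Finset.mem_Icc] at hp
        simp only [Finset.mem_range]
        omega
      have := Finset.sum_le_sum_of_subset (f := fun p => stirling2 q p * Nat.descFactorial N p) hsub
      rw [sum_stirling2_descFactorial] at this
      calc (∑ p ∈ Finset.Icc 1 (q-2), ((stirling2 q p * Nat.descFactorial N p : ℕ) : ℝ))
          = ((∑ p ∈ Finset.Icc 1 (q-2), stirling2 q p * Nat.descFactorial N p : ℕ) : ℝ) := by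
            push_cast; ring
        _ ≤ ((N ^ q : ℕ) : ℝ) := by exact_mod_cast this
        _ = (N:ℝ) ^ q := by push_cast; ring
    have h2 : (1:ℝ) ≤ (q:ℝ)^4 / (N:ℝ)^2 := by
      rw [le_div_iff₀ (by positivity)]
      have : (N:ℝ)^2 ≤ ((q:ℝ)^2)^2 := by
        have : (N:ℝ) ≤ (q:ℝ)^2 := by exact_mod_cast hcase
        nlinarith
      nlinarith
    linarith
  · -- q² < N
    set x : ℝ := (q:ℝ)^2 / (2 * N) with hxdef
    have hx0 : 0 ≤ x := by positivity
    have hxhalf : x ≤ 1/2 := by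
      rw [hxdef, div_le_iff₀ (by positivity)]
      have : (q:ℝ)^2 ≤ (N:ℝ) := by exact_mod_cast hcase.le
      linarith
    have hterm : ∀ p ∈ Finset.Icc 1 (q - 2),
        ((stirling2 q p * Nat.descFactorial N p : ℕ) : ℝ) / (N : ℝ) ^ q
          ≤ x ^ ((q - 2 - p) + 2) := by
      intro p hp
      simp only [Finset.mem_Icc] at hp
      set j := q - p with hjdef
      have hje : (q - 2 - p) + 2 = j := by omega
      rw [hje]
      have h1 : 2 ^ j * stirling2 q p ≤ q ^ (2 * j) := by
        have := stirling2_bound q j (by omega)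
        rwa [show q - j = p by omega] at this
      have h2 : Nat.descFactorial N p ≤ N ^ p := Nat.descFactorial_le_pow N p
      have hnat : stirling2 q p * Nat.descFactorial N p * (2 ^ j * N ^ j)
          ≤ q ^ (2 * j) * N ^ q := by
        calc stirling2 q p * Nat.descFactorial N p * (2 ^ j * N ^ j)
            = (2 ^ j * stirling2 q p) * Nat.descFactorial N p * N ^ j := by ring
          _ ≤ q ^ (2 * j) * N ^ p * N ^ j := by gcongr
          _ = q ^ (2 * j) * N ^ q := by
              rw [mul_assoc, ← pow_add]
              congr 2
              omega
      have hxj : x ^ j = (q:ℝ) ^ (2 * j) / (2 * N) ^ j := by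
        rw [hxdef, div_pow, pow_mul]
      rw [hxj, div_le_div_iff₀ hNq (by positivity)]
      have : ((stirling2 q p * Nat.descFactorial N p : ℕ) : ℝ) * (2 * N : ℝ) ^ j
          = ((stirling2 q p * Nat.descFactorial N p * (2 ^ j * N ^ j) : ℕ) : ℝ) := by
        push_cast
        ring
      rw [this]
      have : ((q:ℝ)) ^ (2 * j) * (N:ℝ) ^ q = ((q ^ (2 * j) * N ^ q : ℕ) : ℝ) := by
        push_cast
        ring
      rw [this]
      exact_mod_cast hnat
    calc (∑ p ∈ Finset.Icc 1 (q - 2),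
          ((stirling2 q p * Nat.descFactorial N p : ℕ) : ℝ) / (N : ℝ) ^ q)
        ≤ ∑ p ∈ Finset.Icc 1 (q - 2), x ^ ((q - 2 - p) + 2) := Finset.sum_le_sum hterm
      _ = ∑ k ∈ Finset.range (q - 2), x ^ (k + 2) := by
          apply Finset.sum_bij' (fun p _ => q - 2 - p) (fun k _ => q - 2 - k)
          · intro a ha
            simp only [Finset.mem_Icc] at ha
            simp only [Finset.mem_range]
            omega
          · intro a ha
            simp only [Finset.mem_range] at ha
            simp only [Finset.mem_Icc]
            omega
          · intro a ha
            simp only [Finset.mem_Icc] at ha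
            omega
          · intro a ha
            simp only [Finset.mem_range] at ha
            omega
          · intro a ha
            rfl
      _ ≤ ∑ k ∈ Finset.range (q - 2), x ^ 2 * (1/2 : ℝ) ^ k := by
          apply Finset.sum_le_sum
          intro k _
          rw [pow_add, mul_comm]
          gcongr
      _ = x ^ 2 * ∑ k ∈ Finset.range (q - 2), (1/2 : ℝ) ^ k := by rw [Finset.mul_sum]
      _ ≤ x ^ 2 * 2 := by
          have := geom_half_le (q - 2)
          nlinarith
      _ ≤ (q : ℝ) ^ 4 / (N : ℝ) ^ 2 := by
          rw [hxdef, div_pow]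
          rw [div_mul_eq_mul_div, div_le_div_iff₀ (by positivity) (by positivity)]
          ring_nf
          nlinarith [sq_nonneg ((q:ℝ)^2), hN0]

lemma stirling2_zero_right (q : ℕ) (hq : 1 ≤ q) : stirling2 q 0 = 0 := by
  cases q with
  | zero => omega
  | succ q => rfl

lemma transMat_row_sum (N r : ℕ) (hN : 1 ≤ N) : ∑' p, transMat N r p = 1 := by
  have hz : ∀ p ∉ Finset.range (r + 1), transMat N r p = 0 := by
    intro p hp
    simp only [Finset.mem_range] at hp
    unfold transMat
    rw [stirling2_eq_zero r p (by omega)]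
    simp
  rw [tsum_eq_sum hz]
  unfold transMat
  simp only [div_eq_mul_inv]
  rw [← Finset.sum_mul]
  have h1 : (∑ p ∈ Finset.range (r + 1),
      ((stirling2 r p * Nat.descFactorial N p : ℕ) : ENNReal)) = ((N ^ r : ℕ) : ENNReal) := by
    rw [← Nat.cast_sum]
    exact_mod_cast congrArg Nat.cast (sum_stirling2_descFactorial r N)
  rw [h1]
  have hcast : ((N ^ r : ℕ) : ENNReal) = ((N : ENNReal)) ^ r := by push_cast; ring
  rw [hcast]
  refine ENNReal.mul_inv_cancel ?_ ?_
  · exact pow_ne_zero _ (by exact_mod_cast Nat.cast_ne_zero.mpr (by omega : N ≠ 0))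
  · exact ENNReal.pow_ne_top (ENNReal.natCast_ne_top N)

def pathExt {k : ℕ} (w : Fin k → ℕ) (m : ℕ) : ℕ := if h : m < k then w ⟨m, h⟩ else 0

noncomputable def pathWt (N i : ℕ) {k : ℕ} (w : Fin (k + 1) → ℕ) : ENNReal :=
  (if pathExt w 0 = i then 1 else 0) *
    ∏ m ∈ Finset.range k, transMat N (pathExt w m) (pathExt w (m + 1))

lemma pathExt_snoc_lt {k : ℕ} (w : Fin (k + 1) → ℕ) (p : ℕ) (m : ℕ) (hm : m ≤ k) :
    pathExt (Fin.snoc w p) m = pathExt w m := by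
  unfold pathExt
  rw [dif_pos (by omega), dif_pos (by omega)]
  have : (⟨m, by omega⟩ : Fin (k + 2)) = Fin.castSucc ⟨m, by omega⟩ := rfl
  rw [this, Fin.snoc_castSucc]

lemma pathExt_snoc_last {k : ℕ} (w : Fin (k + 1) → ℕ) (p : ℕ) :
    pathExt (Fin.snoc w p) (k + 1) = p := by
  unfold pathExt
  rw [dif_pos (by omega)]
  have : (⟨k + 1, by omega⟩ : Fin (k + 2)) = Fin.last (k + 1) := rfl
  rw [this, Fin.snoc_last]

lemma pathWt_snoc (N i : ℕ) {k : ℕ} (w : Fin (k + 1) → ℕ) (p : ℕ) :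
    pathWt N i (Fin.snoc w p) = pathWt N i w * transMat N (pathExt w k) p := by
  unfold pathWt
  rw [Finset.prod_range_succ]
  rw [pathExt_snoc_lt w p 0 (by omega)]
  have hprod : ∏ m ∈ Finset.range k,
      transMat N (pathExt (Fin.snoc w p) m) (pathExt (Fin.snoc w p) (m + 1))
      = ∏ m ∈ Finset.range k, transMat N (pathExt w m) (pathExt w (m + 1)) := by
    apply Finset.prod_congr rfl
    intro m hm
    simp only [Finset.mem_range] at hm
    rw [pathExt_snoc_lt w p m (by omega), pathExt_snoc_lt w p (m + 1) (by omega)]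
  rw [hprod, pathExt_snoc_lt w p k (by omega), pathExt_snoc_last w p]
  ring

def snocEquiv (k : ℕ) : ((Fin (k + 1) → ℕ) × ℕ) ≃ (Fin (k + 2) → ℕ) where
  toFun := fun wp => Fin.snoc wp.1 wp.2
  invFun := fun v => (Fin.init v, v (Fin.last (k + 1)))
  left_inv := by
    intro ⟨w, p⟩
    simp [Fin.init_snoc, Fin.snoc_last]
  right_inv := by
    intro v
    simp [Fin.snoc_init_self]

lemma sum_pathWt (N i : ℕ) (hN : 1 ≤ N) :
    ∀ k : ℕ, ∑' w : Fin (k + 1) → ℕ, pathWt N i w = 1 := by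
  intro k
  induction k with
  | zero =>
    rw [← Equiv.tsum_eq (Equiv.funUnique (Fin 1) ℕ).symm]
    have : ∀ j : ℕ, pathWt N i ((Equiv.funUnique (Fin 1) ℕ).symm j) = if j = i then 1 else 0 := by
      intro j
      unfold pathWt pathExt
      simp
    rw [tsum_congr this]
    exact tsum_ite_eq i 1
  | succ k ih =>
    rw [← Equiv.tsum_eq (snocEquiv k)]
    have : ∀ wp : (Fin (k + 1) → ℕ) × ℕ, pathWt N i ((snocEquiv k) wp)
        = pathWt N i wp.1 * transMat N (pathExt wp.1 k) wp.2 := by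
      intro ⟨w, p⟩
      exact pathWt_snoc N i w p
    rw [tsum_congr this, ENNReal.tsum_prod']
    simp only
    calc ∑' (w : Fin (k + 1) → ℕ) (p : ℕ), pathWt N i w * transMat N (pathExt w k) p
        = ∑' (w : Fin (k + 1) → ℕ), pathWt N i w * ∑' p, transMat N (pathExt w k) p := by
          apply tsum_congr
          intro w
          rw [ENNReal.tsum_mul_left]
      _ = ∑' (w : Fin (k + 1) → ℕ), pathWt N i w := by
          apply tsum_congr
          intro w
          rw [transMat_row_sum N _ hN, mul_one]
      _ = 1 := ih

/-- There is a constant `χ₁ > 0` such that for all `N ≥ 1` and `2 ≤ q ≤ N/2`,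
`Σ_{p=1}^{q−2} S(q,p)(N)_p/N^q ≤ χ₁ q⁴/N²`; equivalently, for the Markov chain `R^{(N,i)}`,
`P[R_{n+1} ≤ R_n − 2 | R_n = q] ≤ χ₁ q⁴/N²` whenever `2 ≤ q ≤ N/2` and the conditioning
event has positive probability. -/

theorem jump_by_two_bound :
    ∃ χ₁ : ℝ, 0 < χ₁ ∧
      (∀ N q : ℕ, 1 ≤ N → 2 ≤ q → (q : ℝ) ≤ (N : ℝ) / 2 →
        (∑ p ∈ Finset.Icc 1 (q - 2),
            ((stirling2 q p * Nat.descFactorial N p : ℕ) : ℝ) / (N : ℝ) ^ q) ≤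
          χ₁ * (q : ℝ) ^ 4 / (N : ℝ) ^ 2) ∧
      (∀ (N i : ℕ) (Ω : Type u) (_ : MeasurableSpace Ω) (P : Measure Ω),
        IsProbabilityMeasure P →
        ∀ (R : ℕ → Ω → ℕ), IsMarkovChainWith P R i (transMat N) →
        ∀ (n q : ℕ), 2 ≤ q → (q : ℝ) ≤ (N : ℝ) / 2 →
          0 < P {ω | R n ω = q} →
          P ({ω | R (n + 1) ω + 2 ≤ R n ω} ∩ {ω | R n ω = q}) ≤
            ENNReal.ofReal (χ₁ * (q : ℝ) ^ 4 / (N : ℝ) ^ 2) * P {ω | R n ω = q}) := by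
  refine ⟨1, one_pos, ?_, ?_⟩
  · intro N q hN hq2 _
    rw [one_mul]
    exact analytic_bound N q hN hq2
  · intro N i Ω _ P hP R hR n q hq2 hqN _
    have hq2' : (2:ℝ) ≤ (q:ℝ) := by exact_mod_cast hq2
    have hN : 1 ≤ N := by
      rcases Nat.eq_zero_or_pos N with h | h
      · subst h; norm_num at hqN; linarith
      · exact h
    have hcyl : ∀ (k : ℕ) (w : Fin (k + 1) → ℕ),
        P {ω | ∀ m ≤ k, R m ω = pathExt w m} = pathWt N i w := fun k w => hR k (pathExt w)
    set s := ∑' w : Fin (n + 1) → ℕ, (if pathExt w n = q then pathWt N i w else 0) with hs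
    set t := ∑' w : Fin (n + 1) → ℕ, (if pathExt w n = q then 0 else pathWt N i w) with ht
    have hst : s + t = 1 := by
      rw [hs, ht, ← ENNReal.tsum_add, ← sum_pathWt N i hN n]
      apply tsum_congr
      intro w
      split_ifs <;> simp
    have hBc : {ω | R n ω = q}ᶜ ⊆ ⋃ w : Fin (n + 1) → ℕ,
        (if pathExt w n = q then (∅ : Set Ω) else {ω | ∀ m ≤ n, R m ω = pathExt w m}) := by
      intro ω hω
      simp only [Set.mem_compl_iff, Set.mem_setOf_eq] at hω
      rw [Set.mem_iUnion]
      refine ⟨fun j => R j ω, ?_⟩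
      have hext : ∀ m ≤ n, pathExt (fun j : Fin (n + 1) => R (j : ℕ) ω) m = R m ω := by
        intro m hm
        unfold pathExt
        rw [dif_pos (by omega)]
      rw [if_neg (by rw [hext n le_rfl]; exact hω)]
      intro m hm
      rw [hext m hm]
    have hPBc : P {ω | R n ω = q}ᶜ ≤ t := by
      calc P {ω | R n ω = q}ᶜ
          ≤ P (⋃ w : Fin (n + 1) → ℕ,
              (if pathExt w n = q then (∅ : Set Ω) else {ω | ∀ m ≤ n, R m ω = pathExt w m})) :=
            measure_mono hBc
        _ ≤ ∑' w : Fin (n + 1) → ℕ, P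
              (if pathExt w n = q then (∅ : Set Ω) else {ω | ∀ m ≤ n, R m ω = pathExt w m}) :=
            measure_iUnion_le _
        _ = t := by
            apply tsum_congr
            intro w
            split_ifs with h
            · simp
            · exact hcyl n w
    have hsP : s ≤ P {ω | R n ω = q} := by
      have h1 : s + t ≤ P {ω | R n ω = q} + t := by
        rw [hst]
        calc (1 : ENNReal) = P Set.univ := measure_univ.symm
          _ = P ({ω | R n ω = q} ∪ {ω | R n ω = q}ᶜ) := by rw [Set.union_compl_self]
          _ ≤ P {ω | R n ω = q} + P {ω | R n ω = q}ᶜ := measure_union_le _ _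
          _ ≤ P {ω | R n ω = q} + t := add_le_add le_rfl hPBc
      have ht_top : t ≠ ⊤ := by
        intro h
        rw [h, add_top] at hst
        exact ENNReal.top_ne_one hst
      exact ENNReal.le_of_add_le_add_right ht_top h1
    set c := ∑' p : ℕ, (if p + 2 ≤ q then transMat N q p else 0) with hc
    have hAB : {ω | R (n + 1) ω + 2 ≤ R n ω} ∩ {ω | R n ω = q} ⊆
        ⋃ v : Fin (n + 2) → ℕ, (if (pathExt v n = q ∧ pathExt v (n + 1) + 2 ≤ q)
          then {ω | ∀ m ≤ n + 1, R m ω = pathExt v m} else (∅ : Set Ω)) := by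
      rintro ω ⟨h1, h2⟩
      simp only [Set.mem_setOf_eq] at h1 h2
      rw [Set.mem_iUnion]
      refine ⟨fun j => R (j : ℕ) ω, ?_⟩
      have hext : ∀ m ≤ n + 1, pathExt (fun j : Fin (n + 2) => R (j : ℕ) ω) m = R m ω := by
        intro m hm
        unfold pathExt
        rw [dif_pos (by omega)]
      rw [if_pos ⟨by rw [hext n (by omega)]; exact h2,
        by rw [hext (n + 1) le_rfl]; omega⟩]
      intro m hm
      rw [hext m hm]
    have hPAB : P ({ω | R (n + 1) ω + 2 ≤ R n ω} ∩ {ω | R n ω = q}) ≤ s * c := by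
      calc P ({ω | R (n + 1) ω + 2 ≤ R n ω} ∩ {ω | R n ω = q})
          ≤ ∑' v : Fin (n + 2) → ℕ, P (if (pathExt v n = q ∧ pathExt v (n + 1) + 2 ≤ q)
              then {ω | ∀ m ≤ n + 1, R m ω = pathExt v m} else (∅ : Set Ω)) :=
            (measure_mono hAB).trans (measure_iUnion_le _)
        _ = ∑' v : Fin (n + 2) → ℕ, (if (pathExt v n = q ∧ pathExt v (n + 1) + 2 ≤ q)
              then pathWt N i v else 0) := by
            apply tsum_congr
            intro v
            split_ifs with h
            · exact hcyl (n + 1) v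
            · simp
        _ = s * c := by
            rw [← Equiv.tsum_eq (snocEquiv n)]
            have hterm : ∀ wp : (Fin (n + 1) → ℕ) × ℕ,
                (if (pathExt ((snocEquiv n) wp) n = q ∧ pathExt ((snocEquiv n) wp) (n + 1) + 2 ≤ q)
                  then pathWt N i ((snocEquiv n) wp) else 0)
                = (if pathExt wp.1 n = q then pathWt N i wp.1 else 0) *
                    (if wp.2 + 2 ≤ q then transMat N q wp.2 else 0) := by
              rintro ⟨w, p⟩
              show (if (pathExt (Fin.snoc w p) n = q ∧ pathExt (Fin.snoc w p) (n + 1) + 2 ≤ q)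
                  then pathWt N i (Fin.snoc w p) else 0) = _
              rw [pathExt_snoc_lt w p n (le_refl n), pathExt_snoc_last w p, pathWt_snoc N i w p]
              by_cases h1 : pathExt w n = q
              · by_cases h2 : p + 2 ≤ q
                · rw [if_pos ⟨h1, h2⟩, if_pos h1, if_pos h2, h1]
                · rw [if_neg (by tauto), if_neg h2, mul_zero]
              · rw [if_neg (by tauto), if_neg h1, zero_mul]
            rw [tsum_congr hterm, ENNReal.tsum_prod']
            calc ∑' (w : Fin (n + 1) → ℕ) (p : ℕ),
                  (if pathExt w n = q then pathWt N i w else 0) *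
                    (if p + 2 ≤ q then transMat N q p else 0)
                = ∑' (w : Fin (n + 1) → ℕ),
                    (if pathExt w n = q then pathWt N i w else 0) * c := by
                  apply tsum_congr
                  intro w
                  rw [ENNReal.tsum_mul_left]
              _ = s * c := ENNReal.tsum_mul_right
    have hc_le : c ≤ ENNReal.ofReal (1 * (q : ℝ) ^ 4 / (N : ℝ) ^ 2) := by
      have hNpos : (0:ℝ) < (N:ℝ) := by exact_mod_cast hN
      have hcsum : c = ∑ p ∈ Finset.range (q - 1), transMat N q p := by
        rw [hc, tsum_eq_sum (s := Finset.range (q - 1))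
          (fun p hp => by simp only [Finset.mem_range] at hp; rw [if_neg (by omega)])]
        apply Finset.sum_congr rfl
        intro p hp
        simp only [Finset.mem_range] at hp
        rw [if_pos (by omega)]
      have hofReal : ∀ p : ℕ, transMat N q p =
          ENNReal.ofReal (((stirling2 q p * Nat.descFactorial N p : ℕ) : ℝ) / (N : ℝ) ^ q) := by
        intro p
        unfold transMat
        rw [ENNReal.ofReal_div_of_pos (by positivity), ENNReal.ofReal_natCast,
          ← ENNReal.ofReal_natCast N, ← ENNReal.ofReal_pow (by positivity)]
      rw [hcsum]
      calc ∑ p ∈ Finset.range (q - 1), transMat N q p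
          = ENNReal.ofReal (∑ p ∈ Finset.range (q - 1),
              ((stirling2 q p * Nat.descFactorial N p : ℕ) : ℝ) / (N : ℝ) ^ q) := by
            rw [ENNReal.ofReal_sum_of_nonneg (fun p _ => by positivity)]
            exact Finset.sum_congr rfl fun p _ => hofReal p
        _ ≤ ENNReal.ofReal (1 * (q : ℝ) ^ 4 / (N : ℝ) ^ 2) := by
            apply ENNReal.ofReal_le_ofReal
            rw [one_mul]
            have heq : ∑ p ∈ Finset.range (q - 1),
                ((stirling2 q p * Nat.descFactorial N p : ℕ) : ℝ) / (N : ℝ) ^ q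
                = ∑ p ∈ Finset.Icc 1 (q - 2),
                  ((stirling2 q p * Nat.descFactorial N p : ℕ) : ℝ) / (N : ℝ) ^ q := by
              symm
              apply Finset.sum_subset
              · intro p hp
                simp only [Finset.mem_Icc] at hp
                simp only [Finset.mem_range]
                omega
              · intro p hp hnp
                simp only [Finset.mem_range] at hp
                simp only [Finset.mem_Icc] at hnp
                have hp0 : p = 0 := by omega
                subst hp0
                rw [stirling2_zero_right q (by omega)]
                simp
            rw [heq]
            exact analytic_bound N q hN hq2
    calc P ({ω | R (n + 1) ω + 2 ≤ R n ω} ∩ {ω | R n ω = q})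
        ≤ s * c := hPAB
      _ ≤ P {ω | R n ω = q} * ENNReal.ofReal (1 * (q : ℝ) ^ 4 / (N : ℝ) ^ 2) :=
          mul_le_mul' hsP hc_le
      _ = ENNReal.ofReal (1 * (q : ℝ) ^ 4 / (N : ℝ) ^ 2) * P {ω | R n ω = q} := mul_comm _ _
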